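/- arXiv:1310.0199 — 2 statements merged into one kernel-verified Lean document; each statement's English description precedes it below -/
import Mathlib

section
/- Let Σ be a hyperplane of PG(n,q) (Σ ≅ PG(n-1,q)) with n ≥ 2. For every k with 3 ≤ k ≤ q^n + 2, there exists a k-cycle embedded in PG(n,q) having exactly two of its vertices in Σ and exactly one of its edges being a line contained in Σ. -/
open Polynomial Module


universe u

lemma exists_field_extension (F : Type u) [Field F] [Fintype F] (n : ℕ) (hn : n ≠ 0) :
    ∃ (K : Type u) (_ : Field K) (_ : Algebra F K) (_ : Fintype K)
      (_ : FiniteDimensional F K),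
      Fintype.card K = Fintype.card F ^ n ∧ finrank F K = n := by
  classical
  have hq1 : 1 < Fintype.card F := Fintype.one_lt_card
  obtain ⟨p, hpc⟩ := CharP.exists F
  haveI := hpc
  obtain ⟨e, hp, hqe⟩ := FiniteField.card F p
  haveI hfp : Fact p.Prime := ⟨hp⟩
  have he : (e : ℕ) ≠ 0 := e.2.ne'
  set Q : ℕ := p ^ ((e : ℕ) * n) with hQdef
  have hQ : Fintype.card F ^ n = Q := by rw [hqe, ← pow_mul]
  have hQ1 : 1 < Q := by
    calc 1 < Fintype.card F := hq1
    _ ≤ Fintype.card F ^ n := Nat.le_self_pow hn _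
    _ = Q := hQ
  let K := SplittingField (X ^ Q - X : F[X])
  haveI : CharP K p := charP_of_injective_algebraMap (algebraMap F K).injective p
  haveI : FiniteDimensional F K := by unfold K; infer_instance
  haveI : Finite K := Module.finite_of_finite F
  haveI : Fintype K := Fintype.ofFinite K
  have aux : (X ^ Q - X : F[X]) ≠ 0 :=
    FiniteField.X_pow_card_sub_X_ne_zero _ hQ1
  have hsep : Separable (X ^ Q - X : F[X]) :=
    galois_poly_separable p _ (dvd_pow_self p (by positivity))
  have key : Fintype.card ((X ^ Q - X : F[X]).rootSet K) = (X ^ Q - X : F[X]).natDegree :=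
    card_rootSet_eq_natDegree hsep (SplittingField.splits _)
  have nd : (X ^ Q - X : F[X]).natDegree = Q :=
    FiniteField.X_pow_card_sub_X_natDegree_eq _ hQ1
  have huniv : (X ^ Q - X : F[X]).rootSet K = Set.univ := by
    rw [Set.eq_univ_iff_forall]
    suffices h : ∀ (x) (_ : x ∈ (⊤ : Subalgebra F K)),
        x ∈ (X ^ Q - X : F[X]).rootSet K by simpa using h
    rw [← SplittingField.adjoin_rootSet]
    simp_rw [Algebra.mem_adjoin_iff]
    intro x hx
    refine Subring.closure_induction ?_ ?_ ?_ ?_ ?_ ?_ hx <;> simp_rw [mem_rootSet_of_ne aux]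
    · rintro x (⟨r, rfl⟩ | hx)
      · simp only [map_sub, map_pow, aeval_X]
        have hr : r ^ p ^ ((e : ℕ) * n) = r := by
          rw [pow_mul, ← hqe]; exact FiniteField.pow_card_pow n r
        show (algebraMap F K r) ^ p ^ ((e : ℕ) * n) - algebraMap F K r = 0
        rw [← map_pow, hr, sub_self]
      · rwa [mem_rootSet_of_ne aux] at hx
    · rw [← coeff_zero_eq_aeval_zero']
      simp only [coeff_X_pow, coeff_X_zero, sub_zero, _root_.map_eq_zero, ite_eq_right_iff,
        one_ne_zero, coeff_sub]
      intro hzero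
      omega
    · simp
    · intro x y _ _ hx hy
      simp only [aeval_X_pow, aeval_X, map_sub, sub_eq_zero] at hx hy ⊢
      show (x + y) ^ p ^ ((e : ℕ) * n) = x + y
      rw [add_pow_char_pow, show x ^ p ^ ((e : ℕ) * n) = x from hx,
        show y ^ p ^ ((e : ℕ) * n) = y from hy]
    · intro x _ hx
      simp only [sub_eq_zero, aeval_X_pow, aeval_X, map_sub, sub_neg_eq_add] at hx ⊢
      show (-x) ^ p ^ ((e : ℕ) * n) + x = 0
      rw [neg_pow, neg_one_pow_char_pow, show x ^ p ^ ((e : ℕ) * n) = x from hx]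
      ring
    · intro x y _ _ hx hy
      simp only [aeval_X_pow, aeval_X, map_sub, mul_pow, sub_eq_zero] at hx hy ⊢
      show x ^ Q * y ^ Q = x * y
      rw [hx, hy]
  have hcard : Fintype.card K = Fintype.card F ^ n := by
    have h1 : Nat.card ((X ^ Q - X : F[X]).rootSet K) = Q := by
      rw [Nat.card_eq_fintype_card, key, nd]
    have h2 : Nat.card K = Nat.card (Set.univ : Set K) :=
      (Nat.card_congr (Equiv.Set.univ K)).symm
    rw [← Nat.card_eq_fintype_card, h2, ← huniv, h1, hQ]
  refine ⟨K, inferInstance, inferInstance, inferInstance, inferInstance, hcard, ?_⟩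
  have hc := card_eq_pow_finrank (K := F) (V := K)
  rw [hcard] at hc
  exact (Nat.pow_right_injective hq1 hc.symm)


lemma exists_avoid (F K : Type*) [Field F] [Fintype F] [Field K] [Fintype K] [Algebra F K]
    (D : Finset (Submodule F K))
    (hDb : ∀ d ∈ D, ∃ b : K, d = Submodule.span F {b})
    (hcard : D.card * (Fintype.card F - 1) + 1 < Fintype.card K) :
    ∃ u : K, u ≠ 0 ∧ ∀ d ∈ D, u ∉ d := by
  classical
  set B : Finset K := insert 0 (D.biUnion fun d => ((d : Set K).toFinset.erase 0)) with hB
  have hBcard : B.card ≤ D.card * (Fintype.card F - 1) + 1 := by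
    have h1 : B.card ≤ (D.biUnion fun d => ((d : Set K).toFinset.erase 0)).card + 1 :=
      Finset.card_insert_le _ _
    have h2 : (D.biUnion fun d => ((d : Set K).toFinset.erase 0)).card
        ≤ ∑ d ∈ D, ((d : Set K).toFinset.erase 0).card := Finset.card_biUnion_le
    have h3 : ∑ d ∈ D, ((d : Set K).toFinset.erase 0).card
        ≤ D.card * (Fintype.card F - 1) := by
      rw [Finset.card_eq_sum_ones D, Finset.sum_mul, one_mul]
      apply Finset.sum_le_sum
      intro d hd
      obtain ⟨b, rfl⟩ := hDb d hd
      have hsub : ((Submodule.span F {b} : Submodule F K) : Set K).toFinset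
          ⊆ Finset.image (fun s : F => s • b) Finset.univ := by
        intro x hx
        rw [Set.mem_toFinset] at hx
        obtain ⟨s, hs⟩ := Submodule.mem_span_singleton.mp hx
        exact Finset.mem_image.mpr ⟨s, Finset.mem_univ _, hs⟩
      have hzero : (0 : K) ∈ ((Submodule.span F {b} : Submodule F K) : Set K).toFinset := by
        rw [Set.mem_toFinset]; exact Submodule.zero_mem _
      rw [Finset.card_erase_of_mem hzero]
      have := (Finset.card_le_card hsub).trans
        ((Finset.card_image_le).trans (le_of_eq (Finset.card_univ)))
      omega
    omega
  have hne : B ≠ Finset.univ := by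
    intro h
    rw [h, Finset.card_univ] at hBcard
    omega
  obtain ⟨u, hu⟩ : ∃ u, u ∉ B := by
    by_contra h
    push_neg at h
    exact hne (Finset.eq_univ_iff_forall.mpr h)
  have hu0 : u ≠ 0 := by
    rintro rfl
    exact hu (Finset.mem_insert_self _ _)
  refine ⟨u, hu0, fun d hd hmem => ?_⟩
  exact hu (Finset.mem_insert_of_mem (Finset.mem_biUnion.mpr
    ⟨d, hd, Finset.mem_erase.mpr ⟨hu0, Set.mem_toFinset.mpr hmem⟩⟩))


lemma model_cycle (F K : Type*) [Field F] [Fintype F] [Field K] [Fintype K] [Algebra F K]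
    (q n k : ℕ) (hq : Fintype.card F = q) (hn : 2 ≤ n) (hk : 3 ≤ k) (hk' : k ≤ q ^ n + 2)
    (hK : Fintype.card K = q ^ n) :
    ∃ pp : Fin k → K × F,
      (∀ i, pp i ≠ 0) ∧
      (∀ i j : Fin k, Submodule.span F {pp i} = Submodule.span F {pp j} → i = j) ∧
      (∀ i j : Fin k,
        Submodule.span F {pp i, pp (i + ⟨1, by omega⟩)}
          = Submodule.span F {pp j, pp (j + ⟨1, by omega⟩)} → i = j) ∧
      {i : Fin k | (pp i).2 = 0} = {⟨0, by omega⟩, ⟨1, by omega⟩} ∧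
      {i : Fin k | (pp i).2 = 0 ∧ (pp (i + ⟨1, by omega⟩)).2 = 0} = {⟨0, by omega⟩} := by
  classical
  have hq2 : 2 ≤ q := hq ▸ Fintype.one_lt_card
  set N := q ^ n with hN
  have hqqN : q * q ≤ N := by
    rw [hN, ← pow_two]
    exact Nat.pow_le_pow_right (by omega) hn
  have hN4 : 4 ≤ N := le_trans (by nlinarith) hqqN
  set m := k - 2 with hm
  have hm1 : 1 ≤ m := by omega
  have hmN : m ≤ N := by omega
  -- generator of Kˣ
  obtain ⟨γ, hγ⟩ := IsCyclic.exists_generator (α := Kˣ)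
  set g : K := (γ : K) with hgdef
  have horder : orderOf γ = N - 1 := by
    rw [orderOf_eq_card_of_forall_mem_zpowers hγ, Nat.card_eq_fintype_card, Fintype.card_units, hK]
  have hg0 : g ≠ 0 := Units.ne_zero γ
  have hpow : ∀ a b : ℕ, a < N - 1 → b < N - 1 → g ^ a = g ^ b → a = b := by
    intro a b ha hb hab
    refine pow_injOn_Iio_orderOf (x := γ) ?_ ?_ ?_
    · simpa [horder] using ha
    · simpa [horder] using hb
    · ext
      simpa using hab
  have hpne1 : ∀ a : ℕ, 0 < a → a < N - 1 → g ^ a ≠ (1 : K) := by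
    intro a h1 h2 h
    have := hpow a 0 h2 (by omega) (by simpa using h)
    omega
  have hg1 : g ≠ 1 := by
    have := hpne1 1 (by omega) (by omega)
    simpa using this
  have hv0 : g - 1 ≠ 0 := sub_ne_zero.mpr hg1
  have horderg : orderOf g = N - 1 := by rw [hgdef, orderOf_units, horder]
  have hgF : ∀ s : F, algebraMap F K s ≠ g := by
    intro s h
    have hs0 : s ≠ 0 := by
      rintro rfl
      rw [map_zero] at h
      exact hg0 h.symm
    have hs1 : s ^ (Fintype.card F - 1) = 1 := FiniteField.pow_card_sub_one_eq_one s hs0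
    have h1 : g ^ (q - 1) = 1 := by
      rw [← hq, ← h, ← map_pow, hs1, map_one]
    have h2 := Nat.le_of_dvd (by omega) (horderg ▸ orderOf_dvd_of_pow_eq_one h1)
    have : 2 * q ≤ q * q := by nlinarith
    omega
  have hglin : ∀ s t : F, algebraMap F K s * g = algebraMap F K t → s = 0 ∧ t = 0 := by
    intro s t hst
    rcases eq_or_ne s 0 with rfl | hs
    · rw [map_zero, zero_mul] at hst
      exact ⟨rfl, by simpa using ((_root_.map_eq_zero _).mp hst.symm)⟩
    · exfalso
      apply hgF (s⁻¹ * t)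
      have hσs : algebraMap F K s ≠ 0 := (_root_.map_ne_zero _).mpr hs
      rw [map_mul, map_inv₀, ← hst, inv_mul_cancel_left₀ hσs]
  -- the path points in K
  set w : ℕ → K := fun j => if j = 0 then 0 else g ^ j with hw
  -- bad directions
  set J : Finset ℕ := (Finset.Icc 1 (m - 2)).filter
      (fun j => ∃ t : F, g ^ (m - 1 - j) = 1 + algebraMap F K t * (g - 1)) with hJ
  have hJmem : ∀ j ∈ J, (1 ≤ j ∧ j ≤ m - 2) ∧
      ∃ t : F, g ^ (m - 1 - j) = 1 + algebraMap F K t * (g - 1) := by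
    intro j hj
    rw [hJ, Finset.mem_filter, Finset.mem_Icc] at hj
    exact hj
  have hJcard : J.card ≤ q - 1 := by
    set tf : ℕ → F := fun j =>
      if h : ∃ t : F, g ^ (m - 1 - j) = 1 + algebraMap F K t * (g - 1) then h.choose else 0
      with htf
    have keytf : ∀ j ∈ J, g ^ (m - 1 - j) = 1 + algebraMap F K (tf j) * (g - 1) := by
      intro j hj
      obtain ⟨_, ht⟩ := hJmem j hj
      rw [htf]
      simp only [dif_pos ht]
      exact ht.choose_spec
    have hmapsto : ∀ j ∈ J, tf j ∈ Finset.univ.erase (0 : F) := by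
      intro j hj
      rw [Finset.mem_erase]
      refine ⟨?_, Finset.mem_univ _⟩
      intro h0
      have h1 := keytf j hj
      rw [h0, map_zero, zero_mul, add_zero] at h1
      obtain ⟨⟨hj1, hj2⟩, _⟩ := hJmem j hj
      exact hpne1 (m - 1 - j) (by omega) (by omega) h1
    have hinj : Set.InjOn tf J := by
      intro j hj l hl hjl
      have h1 := keytf j hj
      have h2 := keytf l hl
      rw [hjl, ← h2] at h1
      obtain ⟨⟨hj1, hj2⟩, _⟩ := hJmem j hj
      obtain ⟨⟨hl1, hl2⟩, _⟩ := hJmem l hl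
      have := hpow _ _ (by omega) (by omega) h1
      omega
    have := Finset.card_le_card_of_injOn tf hmapsto hinj
    rw [Finset.card_erase_of_mem (Finset.mem_univ (0 : F)), Finset.card_univ, hq] at this
    exact this
  set cC : Prop := (2 ≤ m ∧ ∃ s : F, g ^ (m - 2) = algebraMap F K s) with hcC
  set D : Finset (Submodule F K) :=
    insert (Submodule.span F {g - 1})
      ((if cC then {Submodule.span F {g}} else ∅)
        ∪ J.image (fun j => Submodule.span F {g ^ j * (g - 1)})) with hD
  have hDcard : D.card ≤ q := by
    by_cases hc : cC
    · rcases Nat.lt_or_ge m 3 with hm3 | hm3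
      · have hJe : J = ∅ := by
          rw [hJ]
          have h20 : m - 2 = 0 := by omega
          rw [h20]
          simp [Finset.Icc_eq_empty_of_lt]
        rw [hD, if_pos hc, hJe]
        simp only [Finset.image_empty, Finset.union_empty]
        have := Finset.card_insert_le (Submodule.span F {g - 1}) {Submodule.span F {g}}
        simp only [Finset.card_singleton] at this
        omega
      · have hsub : D ⊆ insert (Submodule.span F {g})
            (J.image fun j => Submodule.span F {g ^ j * (g - 1)}) := by
          intro d hd
          rw [hD] at hd
          rcases Finset.mem_insert.mp hd with rfl | hd2
          · apply Finset.mem_insert_of_mem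
            apply Finset.mem_image.mpr
            refine ⟨m - 2, ?_, ?_⟩
            · rw [hJ, Finset.mem_filter, Finset.mem_Icc]
              refine ⟨⟨by omega, le_refl _⟩, 1, ?_⟩
              have hme : m - 1 - (m - 2) = 1 := by omega
              rw [hme, pow_one, map_one, one_mul]
              ring
            · obtain ⟨s, hs⟩ := hc.2
              have hs0 : s ≠ 0 := by
                rintro rfl
                rw [map_zero] at hs
                exact pow_ne_zero _ hg0 hs
              rw [hs]
              have hsm : algebraMap F K s * (g - 1) = s • (g - 1) :=
                (Algebra.smul_def s (g - 1)).symm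
              rw [hsm, Submodule.span_singleton_smul_eq (IsUnit.mk0 s hs0) _]
          · rw [if_pos hc] at hd2
            rcases Finset.mem_union.mp hd2 with hd3 | hd3
            · exact Finset.mem_insert.mpr (Or.inl (Finset.mem_singleton.mp hd3))
            · exact Finset.mem_insert_of_mem hd3
        have h1 := Finset.card_le_card hsub
        have h2 := Finset.card_insert_le (Submodule.span F {g})
          (J.image fun j => Submodule.span F {g ^ j * (g - 1)})
        have h3 := Finset.card_image_le (s := J)
          (f := fun j => Submodule.span F {g ^ j * (g - 1)})
        omega
    · rw [hD, if_neg hc]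
      simp only [Finset.empty_union]
      have h2 := Finset.card_insert_le (Submodule.span F {g - 1})
        (J.image fun j => Submodule.span F {g ^ j * (g - 1)})
      have h3 := Finset.card_image_le (s := J)
        (f := fun j => Submodule.span F {g ^ j * (g - 1)})
      omega
  have hDballs : ∀ d ∈ D, ∃ b : K, d = Submodule.span F {b} := by
    intro d hd
    rw [hD] at hd
    rcases Finset.mem_insert.mp hd with rfl | hd2
    · exact ⟨g - 1, rfl⟩
    rcases Finset.mem_union.mp hd2 with hd3 | hd3
    · by_cases hc : cC
      · rw [if_pos hc] at hd3
        exact ⟨g, Finset.mem_singleton.mp hd3⟩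
      · rw [if_neg hc] at hd3
        exact absurd hd3 (Finset.notMem_empty _)
    · obtain ⟨j, _, rfl⟩ := Finset.mem_image.mp hd3
      exact ⟨_, rfl⟩
  obtain ⟨u, hu0, huD⟩ := exists_avoid F K D hDballs (by
    rw [hq, hK]
    have h1 : D.card * (q - 1) ≤ q * (q - 1) := Nat.mul_le_mul_right _ hDcard
    have h2 : q * (q - 1) + q = q * q := by
      have : q - 1 + 1 = q := by omega
      calc q * (q - 1) + q = q * ((q - 1) + 1) := by ring
      _ = q * q := by rw [this]
    omega)
  have hU1 : u ∉ Submodule.span F {g - 1} := huD _ (by rw [hD]; exact Finset.mem_insert_self _ _)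
  have hU2 : cC → u ∉ Submodule.span F {g} := by
    intro hc
    refine huD _ ?_
    rw [hD]
    refine Finset.mem_insert_of_mem (Finset.mem_union_left _ ?_)
    rw [if_pos hc]
    exact Finset.mem_singleton_self _
  have hU3 : ∀ j ∈ J, u ∉ Submodule.span F {g ^ j * (g - 1)} := by
    intro j hj
    refine huD _ ?_
    rw [hD]
    exact Finset.mem_insert_of_mem (Finset.mem_union_right _ (Finset.mem_image_of_mem _ hj))
  -- the points
  set pt : ℕ → K × F := fun i =>
    if i = 0 then (u, 0) else if i = 1 then (g - 1, 0) else (w (i - 2), 1) with hpt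
  have hpt0 : pt 0 = (u, 0) := by simp [hpt]
  have hpt1 : pt 1 = (g - 1, 0) := by simp [hpt]
  have hpt2 : ∀ x, 2 ≤ x → pt x = (w (x - 2), 1) := by
    intro x hx
    simp only [hpt]
    rw [if_neg (by omega), if_neg (by omega)]
  have hw0 : w 0 = 0 := by simp [hw]
  have hwp : ∀ c, 1 ≤ c → w c = g ^ c := by
    intro c hc
    simp only [hw]
    rw [if_neg (by omega)]
  -- membership tools
  have hmemP : ∀ a b x : K × F, x ∈ Submodule.span F {a, b} ↔
      ∃ s t : F, algebraMap F K s * a.1 + algebraMap F K t * b.1 = x.1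
        ∧ s * a.2 + t * b.2 = x.2 := by
    intro a b x
    rw [Submodule.mem_span_pair]
    refine exists_congr fun s => exists_congr fun t => ?_
    rw [Prod.ext_iff]
    simp [Algebra.smul_def, smul_eq_mul]
  have hmemS : ∀ a x : K × F, x ∈ Submodule.span F {a} ↔
      ∃ s : F, algebraMap F K s * a.1 = x.1 ∧ s * a.2 = x.2 := by
    intro a x
    rw [Submodule.mem_span_singleton]
    refine exists_congr fun s => ?_
    rw [Prod.ext_iff]
    simp [Algebra.smul_def, smul_eq_mul]
  have hmemL : ∀ a b : K × F, a ∈ Submodule.span F {a, b} :=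
    fun a b => Submodule.subset_span (Set.mem_insert _ _)
  have hmemR : ∀ a b : K × F, b ∈ Submodule.span F {a, b} :=
    fun a b => Submodule.subset_span (Set.mem_insert_of_mem _ rfl)
  -- helper: (0,1) cannot be on a far chord
  have hzmem : ∀ c : ℕ, 1 ≤ c → (((0 : K), (1 : F)) : K × F) ∈
      Submodule.span F {((g ^ c, (1 : F)) : K × F), ((g ^ (c + 1), (1 : F)) : K × F)} → False := by
    intro c hc hmm
    rw [hmemP] at hmm
    obtain ⟨s, t, h1, h2⟩ := hmm
    dsimp only at h1 h2
    have h4 : g ^ c * (algebraMap F K t * g) = g ^ c * algebraMap F K (-s) := by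
      rw [map_neg]
      linear_combination h1
    obtain ⟨h6, h7⟩ := hglin _ _ (mul_left_cancel₀ (pow_ne_zero _ hg0) h4)
    have h8 : s = 0 := by simpa using h7
    rw [h6, h8] at h2
    simp at h2
  -- helper: membership of an affine point on a chord
  have hchord : ∀ c d : ℕ, 1 ≤ c → c ≤ d →
      (((g ^ d, (1 : F)) : K × F)) ∈
        Submodule.span F {((g ^ c, (1 : F)) : K × F), ((g ^ (c + 1), (1 : F)) : K × F)} →
      ∃ t : F, g ^ (d - c) = 1 + algebraMap F K t * (g - 1) := by
    intro c d hc hcd hmm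
    rw [hmemP] at hmm
    obtain ⟨s, t, h1, h2⟩ := hmm
    dsimp only at h1 h2
    have hs : s = 1 - t := by linear_combination h2
    refine ⟨t, ?_⟩
    have h4 : g ^ c * g ^ (d - c) = g ^ c * (1 + algebraMap F K t * (g - 1)) := by
      rw [← pow_add, show c + (d - c) = d from by omega]
      rw [hs, map_sub, map_one] at h1
      linear_combination -h1
    exact mul_left_cancel₀ (pow_ne_zero _ hg0) h4
  -- helper : (u,0) on a chord gives contradiction
  have huchord : ∀ c : ℕ, 1 ≤ c → c ≤ m - 2 →
      (((u, (0 : F)) : K × F)) ∈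
        Submodule.span F {((g ^ c, (1 : F)) : K × F), ((g ^ (c + 1), (1 : F)) : K × F)} →
      u ∈ Submodule.span F {g ^ c * (g - 1)} := by
    intro c hc hcm hmm
    rw [hmemP] at hmm
    obtain ⟨s, t, h1, h2⟩ := hmm
    dsimp only at h1 h2
    have hs : s = -t := by linear_combination h2
    rw [Submodule.mem_span_singleton]
    refine ⟨t, ?_⟩
    rw [Algebra.smul_def]
    rw [hs, map_neg] at h1
    linear_combination h1
  -- vertex distinctness
  have keyv : ∀ a b : ℕ, a < b → b < k →
      Submodule.span F {pt a} = Submodule.span F {pt b} → False := by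
    intro a b hab hbk heq
    rcases Nat.lt_or_ge b 2 with hb2 | hb2
    · have ha : a = 0 := by omega
      have hb : b = 1 := by omega
      subst ha; subst hb
      have h1 : pt 0 ∈ Submodule.span F {pt 1} := heq ▸ Submodule.mem_span_singleton_self _
      rw [hpt0, hpt1, hmemS] at h1
      obtain ⟨s, hs1, _⟩ := h1
      dsimp only at hs1
      exact hU1 (Submodule.mem_span_singleton.mpr ⟨s, by rw [Algebra.smul_def]; exact hs1⟩)
    · have h1 : pt b ∈ Submodule.span F {pt a} := heq ▸ Submodule.mem_span_singleton_self _
      rw [hpt2 b hb2, hmemS] at h1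
      obtain ⟨s, hs1, hs2⟩ := h1
      rcases Nat.lt_or_ge a 2 with ha2 | ha2
      · have hpa : (pt a).2 = 0 := by
          rcases (by omega : a = 0 ∨ a = 1) with rfl | rfl
          · rw [hpt0]
          · rw [hpt1]
        rw [hpa] at hs2
        simp at hs2
      · rw [hpt2 a ha2] at hs1 hs2
        dsimp only at hs1 hs2
        have hs : s = 1 := by simpa using hs2
        rw [hs, map_one, one_mul] at hs1
        rcases eq_or_ne a 2 with rfl | ha3
        · rw [show (2 : ℕ) - 2 = 0 from rfl, hw0, hwp (b - 2) (by omega)] at hs1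
          exact pow_ne_zero _ hg0 hs1.symm
        · rw [hwp (a - 2) (by omega), hwp (b - 2) (by omega)] at hs1
          have hcan : g ^ (b - a) = 1 := by
            have h5 : g ^ (a - 2) * g ^ (b - a) = g ^ (a - 2) * 1 := by
              rw [mul_one, ← pow_add, show a - 2 + (b - a) = b - 2 from by omega]
              exact hs1.symm
            exact mul_left_cancel₀ (pow_ne_zero _ hg0) h5
          exact hpne1 (b - a) (by omega) (by omega) hcan
  -- edge distinctness
  have hmod : ∀ x : ℕ, x + 1 < k → (x + 1) % k = x + 1 := fun x h => Nat.mod_eq_of_lt h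
  have key : ∀ a b : ℕ, a < b → b < k →
      Submodule.span F {pt a, pt ((a + 1) % k)} = Submodule.span F {pt b, pt ((b + 1) % k)} →
      False := by
    intro a b hab hbk heq
    by_cases ha0 : a = 0
    · subst ha0
      rw [hmod 0 (by omega)] at heq
      have hx : ∃ x₁ : K, ((x₁, (1 : F)) : K × F) ∈
          Submodule.span F {pt b, pt ((b + 1) % k)} := by
        rcases Nat.lt_or_ge (b + 1) k with hbk1 | hbk1
        · refine ⟨w (b + 1 - 2), ?_⟩
          rw [hmod b hbk1, ← hpt2 (b + 1) (by omega)]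
          exact hmemR _ _
        · refine ⟨w (b - 2), ?_⟩
          rw [← hpt2 b (by omega)]
          exact hmemL _ _
      obtain ⟨x₁, hx⟩ := hx
      rw [← heq, hpt0, hpt1, hmemP] at hx
      obtain ⟨s, t, _, h2⟩ := hx
      dsimp only at h2
      simp at h2
    by_cases ha1 : a = 1
    · subst ha1
      rw [hmod 1 (by omega), hpt2 2 le_rfl, hw0] at heq
      rcases Nat.lt_or_ge (b + 1) k with hbk1 | hbk1
      · rw [hmod b hbk1] at heq
        rcases eq_or_ne b 2 with rfl | hb3
        · have h3 : pt 3 ∈ Submodule.span F {pt 1, ((0 : K), (1 : F))} := by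
            rw [heq]; exact hmemR _ _
          rw [hpt2 3 (by omega), hpt1, hmemP] at h3
          obtain ⟨s, t, h1, h2⟩ := h3
          dsimp only at h1 h2
          rw [hwp 1 (by omega), pow_one] at h1
          have h4 : algebraMap F K (s - 1) * g = algebraMap F K s := by
            rw [map_sub, map_one]
            linear_combination h1
          obtain ⟨h5, h6⟩ := hglin _ _ h4
          rw [h6] at h5
          simp at h5
        · have h3 : (((0 : K), (1 : F)) : K × F) ∈
              Submodule.span F {pt b, pt (b + 1)} := by
            rw [← heq]; exact hmemR _ _
          rw [hpt2 b (by omega), hpt2 (b + 1) (by omega),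
            hwp (b - 2) (by omega), hwp (b + 1 - 2) (by omega),
            show b + 1 - 2 = (b - 2) + 1 from by omega] at h3
          exact hzmem (b - 2) (by omega) h3
      · have hb0 : (b + 1) % k = 0 := by rw [show b + 1 = k from by omega, Nat.mod_self]
        have h3 : pt 1 ∈ Submodule.span F {pt b, pt ((b + 1) % k)} := by
          rw [← heq]; exact hmemL _ _
        rw [hb0, hpt0, hpt1, hpt2 b (by omega), hmemP] at h3
        obtain ⟨s, t, h1, h2⟩ := h3
        dsimp only at h1 h2
        have hs0 : s = 0 := by simpa using h2
        rw [hs0, map_zero, zero_mul, zero_add] at h1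
        have ht0 : t ≠ 0 := by
          rintro rfl
          rw [map_zero, zero_mul] at h1
          exact hv0 h1.symm
        apply hU1
        rw [Submodule.mem_span_singleton]
        refine ⟨t⁻¹, ?_⟩
        rw [Algebra.smul_def, map_inv₀, ← h1, ← mul_assoc,
          inv_mul_cancel₀ ((_root_.map_ne_zero _).mpr ht0), one_mul]
    -- now 2 ≤ a
    have ha2 : 2 ≤ a := by omega
    rw [hmod a (by omega)] at heq
    rcases Nat.lt_or_ge (b + 1) k with hbk1 | hbk1
    · -- chord versus chord
      rw [hmod b hbk1] at heq
      rcases eq_or_ne a 2 with rfl | ha3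
      · have h3 : (((0 : K), (1 : F)) : K × F) ∈
            Submodule.span F {pt b, pt (b + 1)} := by
          rw [← heq, hpt2 2 le_rfl, hw0]
          exact hmemL _ _
        rw [hpt2 b (by omega), hpt2 (b + 1) (by omega),
          hwp (b - 2) (by omega), hwp (b + 1 - 2) (by omega),
          show b + 1 - 2 = (b - 2) + 1 from by omega] at h3
        exact hzmem (b - 2) (by omega) h3
      · -- both chords with c ≥ 1
        rw [hpt2 a ha2, hpt2 (a + 1) (by omega), hpt2 b (by omega), hpt2 (b + 1) (by omega),
          hwp (a - 2) (by omega), hwp (a + 1 - 2) (by omega),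
          hwp (b - 2) (by omega), hwp (b + 1 - 2) (by omega),
          show a + 1 - 2 = (a - 2) + 1 from by omega,
          show b + 1 - 2 = (b - 2) + 1 from by omega] at heq
        have h3 : (((g ^ (b - 2), (1 : F))) : K × F) ∈
            Submodule.span F {((g ^ (a - 2), (1 : F)) : K × F),
              ((g ^ ((a - 2) + 1), (1 : F)) : K × F)} := by
          rw [heq]; exact hmemL _ _
        have h4 : (((g ^ ((b - 2) + 1), (1 : F))) : K × F) ∈
            Submodule.span F {((g ^ (a - 2), (1 : F)) : K × F),
              ((g ^ ((a - 2) + 1), (1 : F)) : K × F)} := by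
          rw [heq]; exact hmemR _ _
        obtain ⟨t, ht⟩ := hchord (a - 2) (b - 2) (by omega) (by omega) h3
        obtain ⟨t', ht'⟩ := hchord (a - 2) ((b - 2) + 1) (by omega) (by omega) h4
        have e3 : g ^ (b - 2 - (a - 2)) * g = g ^ ((b - 2) + 1 - (a - 2)) := by
          rw [← pow_succ]
          congr 1
          omega
        have e5 : g ^ (b - 2 - (a - 2)) * (g - 1)
            = (algebraMap F K t' - algebraMap F K t) * (g - 1) := by
          linear_combination e3 + ht' - ht
        have e6 := mul_right_cancel₀ hv0 e5
        have e7 : algebraMap F K t * g = algebraMap F K (t' - 1) := by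
          rw [map_sub, map_one]
          linear_combination e6 - ht
        obtain ⟨h6, _⟩ := hglin _ _ e7
        rw [h6, map_zero, zero_mul, add_zero] at ht
        exact hpne1 (b - 2 - (a - 2)) (by omega) (by omega) ht
    · -- b = k - 1, the closing edge
      have hb0 : (b + 1) % k = 0 := by rw [show b + 1 = k from by omega, Nat.mod_self]
      have hm2 : 2 ≤ m := by omega
      rw [hb0, hpt0, hpt2 b (by omega), hwp (b - 2) (by omega)] at heq
      rcases eq_or_ne a 2 with rfl | ha3
      · -- chord from 0 to g
        rw [hpt2 2 le_rfl, hw0, hpt2 3 (by omega), hwp 1 (by omega), pow_one] at heq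
        have h3 : (((g ^ (b - 2), (1 : F))) : K × F) ∈
            Submodule.span F {((0 : K), (1 : F)), ((g, (1 : F)) : K × F)} := by
          rw [heq]; exact hmemL _ _
        have h4 : (((u, (0 : F))) : K × F) ∈
            Submodule.span F {((0 : K), (1 : F)), ((g, (1 : F)) : K × F)} := by
          rw [heq]; exact hmemR _ _
        rw [hmemP] at h3 h4
        obtain ⟨s, t, h1, h2⟩ := h3
        obtain ⟨s', t', h1', h2'⟩ := h4
        dsimp only at h1 h2 h1' h2'
        rw [mul_zero, zero_add] at h1 h1'
        have hcc : cC := by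
          refine ⟨hm2, t, ?_⟩
          have h5 : g ^ (m - 2) * g = algebraMap F K t * g := by
            rw [← pow_succ, show m - 2 + 1 = b - 2 from by omega]
            exact h1.symm
          exact mul_right_cancel₀ hg0 h5
        apply hU2 hcc
        rw [Submodule.mem_span_singleton]
        exact ⟨t', by rw [Algebra.smul_def]; exact h1'⟩
      · -- chord with c ≥ 1
        rw [hpt2 a ha2, hpt2 (a + 1) (by omega),
          hwp (a - 2) (by omega), hwp (a + 1 - 2) (by omega),
          show a + 1 - 2 = (a - 2) + 1 from by omega] at heq
        have h3 : (((g ^ (b - 2), (1 : F))) : K × F) ∈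
            Submodule.span F {((g ^ (a - 2), (1 : F)) : K × F),
              ((g ^ ((a - 2) + 1), (1 : F)) : K × F)} := by
          rw [heq]; exact hmemL _ _
        have h4 : (((u, (0 : F))) : K × F) ∈
            Submodule.span F {((g ^ (a - 2), (1 : F)) : K × F),
              ((g ^ ((a - 2) + 1), (1 : F)) : K × F)} := by
          rw [heq]; exact hmemR _ _
        obtain ⟨t, ht⟩ := hchord (a - 2) (b - 2) (by omega) (by omega) h3
        have haJ : (a - 2) ∈ J := by
          rw [hJ, Finset.mem_filter, Finset.mem_Icc]
          refine ⟨⟨by omega, by omega⟩, t, ?_⟩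
          rw [show m - 1 - (a - 2) = b - 2 - (a - 2) from by omega]
          exact ht
        exact hU3 (a - 2) haJ (huchord (a - 2) (by omega) (by omega) h4)
  -- assemble
  have hval1 : ∀ i : Fin k, (i + (⟨1, by omega⟩ : Fin k)).val = (i.val + 1) % k := by
    intro i
    rw [Fin.val_add]
  refine ⟨fun i => pt i.val, ?_, ?_, ?_, ?_, ?_⟩
  · intro i
    show pt i.val ≠ 0
    rcases Nat.lt_or_ge i.val 2 with h2 | h2
    · rcases (by omega : i.val = 0 ∨ i.val = 1) with h | h <;> rw [h]
      · rw [hpt0]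
        intro hcon
        exact hu0 (congrArg Prod.fst hcon)
      · rw [hpt1]
        intro hcon
        exact hv0 (congrArg Prod.fst hcon)
    · rw [hpt2 _ h2]
      intro hcon
      have := congrArg Prod.snd hcon
      simp at this
  · intro i j hij
    by_contra hne
    have hne' : i.val ≠ j.val := fun h => hne (Fin.ext h)
    rcases Nat.lt_or_ge i.val j.val with h | h
    · exact keyv _ _ h j.isLt hij
    · exact keyv _ _ (by omega) i.isLt hij.symm
  · intro i j hij
    simp only [hval1] at hij
    by_contra hne
    have hne' : i.val ≠ j.val := fun h => hne (Fin.ext h)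
    rcases Nat.lt_or_ge i.val j.val with h | h
    · exact key _ _ h j.isLt hij
    · exact key _ _ (by omega) i.isLt hij.symm
  · ext i
    simp only [Set.mem_setOf_eq, Set.mem_insert_iff, Set.mem_singleton_iff]
    constructor
    · intro h
      have h' : (pt i.val).2 = 0 := h
      by_contra hcon
      push_neg at hcon
      obtain ⟨hc1, hc2⟩ := hcon
      have h0 : i.val ≠ 0 := fun hh => hc1 (Fin.ext (by simpa using hh))
      have h1 : i.val ≠ 1 := fun hh => hc2 (Fin.ext (by simpa using hh))
      rw [hpt2 _ (by omega)] at h'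
      simp at h'
    · rintro (rfl | rfl)
      · show (pt (0 : ℕ)).2 = 0
        rw [hpt0]
      · show (pt (1 : ℕ)).2 = 0
        rw [hpt1]
  · ext i
    simp only [Set.mem_setOf_eq, Set.mem_singleton_iff, hval1]
    constructor
    · rintro ⟨h1, h2⟩
      have h1' : (pt i.val).2 = 0 := h1
      have h2' : (pt ((i.val + 1) % k)).2 = 0 := h2
      by_contra hcon
      have h0 : i.val ≠ 0 := fun hh => hcon (Fin.ext (by simpa using hh))
      rcases Nat.lt_or_ge i.val 2 with hlt | hge
      · have hi1 : i.val = 1 := by omega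
        rw [hi1, hmod 1 (by omega), hpt2 2 le_rfl] at h2'
        simp at h2'
      · rw [hpt2 _ hge] at h1'
        simp at h1'
    · rintro rfl
      constructor
      · show (pt (0 : ℕ)).2 = 0
        rw [hpt0]
      · show (pt ((0 + 1) % k)).2 = 0
        rw [hmod 0 (by omega), hpt1]





theorem cycle_transport (q n k : ℕ) (F : Type*) [Field F] [Fintype F]
    (hq : Fintype.card F = q) (hn : 2 ≤ n)
    (S : Submodule F (Fin (n + 1) → F)) (hS : finrank F S = n)
    (hk : 3 ≤ k) (hk' : k ≤ q ^ n + 2)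
    (K : Type*) [Field K] [Fintype K] [Algebra F K] [FiniteDimensional F K]
    (hKcard : Fintype.card K = q ^ n) (hKrank : finrank F K = n)
    (model : ∃ pp : Fin k → K × F,
      (∀ i, pp i ≠ 0) ∧
      (∀ i j : Fin k, Submodule.span F {pp i} = Submodule.span F {pp j} → i = j) ∧
      (∀ i j : Fin k,
        Submodule.span F {pp i, pp (i + ⟨1, by omega⟩)}
          = Submodule.span F {pp j, pp (j + ⟨1, by omega⟩)} → i = j) ∧
      {i : Fin k | (pp i).2 = 0} = {⟨0, by omega⟩, ⟨1, by omega⟩} ∧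
      {i : Fin k | (pp i).2 = 0 ∧ (pp (i + ⟨1, by omega⟩)).2 = 0} = {⟨0, by omega⟩}) :
    ∃ f : Fin k → Submodule F (Fin (n + 1) → F),
      (∀ i, finrank F (f i) = 1) ∧
      Function.Injective f ∧
      Function.Injective (fun i : Fin k => f i ⊔ f (i + ⟨1, by omega⟩)) ∧
      {i : Fin k | f i ≤ S}.ncard = 2 ∧
      {i : Fin k | f i ⊔ f (i + ⟨1, by omega⟩) ≤ S}.ncard = 1 := by
  classical
  set V := (Fin (n + 1) → F) with hV
  have hVrank : finrank F V = n + 1 := Module.finrank_fin_fun F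
  have hSneTop : S ≠ ⊤ := by
    intro h
    rw [h, finrank_top, hVrank] at hS
    omega
  obtain ⟨e, he⟩ : ∃ e : V, e ∉ S := by
    by_contra h
    push_neg at h
    exact hSneTop (Submodule.eq_top_iff'.mpr h)
  set ψ : K ≃ₗ[F] S := LinearEquiv.ofFinrankEq K S (by rw [hKrank, hS]) with hψ
  set L : (K × F) →ₗ[F] V := S.subtype.comp (ψ.toLinearMap.comp (LinearMap.fst F K F))
      + (LinearMap.toSpanSingleton F V e).comp (LinearMap.snd F K F) with hL
  have hLapp : ∀ x : K × F, L x = (ψ x.1 : V) + x.2 • e := by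
    intro x
    simp [hL, LinearMap.toSpanSingleton_apply]
  have hLinj : Function.Injective L := by
    rw [← LinearMap.ker_eq_bot, Submodule.eq_bot_iff]
    intro x hx
    rw [LinearMap.mem_ker, hLapp] at hx
    have hx2 : x.2 = 0 := by
      by_contra h2
      have h3 : x.2 • e = -(ψ x.1 : V) := eq_neg_of_add_eq_zero_right hx
      have h4 : e = x.2⁻¹ • -(ψ x.1 : V) := by
        rw [← h3, smul_smul, inv_mul_cancel₀ h2, one_smul]
      refine he ?_
      rw [h4]
      exact S.smul_mem _ (S.neg_mem (ψ x.1).2)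
    rw [hx2, zero_smul, add_zero] at hx
    have hx1 : x.1 = 0 := by
      have h5 : ψ x.1 = 0 := by
        rwa [ZeroMemClass.coe_eq_zero] at hx
      exact ψ.map_eq_zero_iff.mp h5
    ext
    · exact hx1
    · exact hx2
  have hdim : finrank F (K × F) = finrank F V := by
    rw [Module.finrank_prod, hKrank, Module.finrank_self, hVrank]
  set Φ : (K × F) ≃ₗ[F] V := LinearMap.linearEquivOfInjective L hLinj hdim with hΦ
  have hΦapp : ∀ x, Φ x = L x := fun x => LinearMap.linearEquivOfInjective_apply hLinj hdim x
  set S₀ : Submodule F (K × F) := LinearMap.ker (LinearMap.snd F K F) with hS₀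
  have hS₀mem : ∀ x : K × F, x ∈ S₀ ↔ x.2 = 0 := fun x => by
    simp [hS₀, LinearMap.mem_ker]
  have hS₀rank : finrank F S₀ = n := by
    have h1 := LinearMap.finrank_range_add_finrank_ker (LinearMap.snd F K F)
    have h2 : LinearMap.range (LinearMap.snd F K F) = ⊤ :=
      LinearMap.range_eq_top.mpr (fun c => ⟨(0, c), rfl⟩)
    rw [h2, finrank_top, Module.finrank_self, Module.finrank_prod, hKrank,
      Module.finrank_self] at h1
    rw [hS₀]
    omega
  have hmapS : Submodule.map (Φ : (K × F) →ₗ[F] V) S₀ = S := by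
    apply Submodule.eq_of_le_of_finrank_le
    · rintro x ⟨y, hy, rfl⟩
      have hy2 : y.2 = 0 := (hS₀mem y).mp hy
      rw [LinearEquiv.coe_coe, hΦapp, hLapp, hy2, zero_smul, add_zero]
      exact (ψ y.1).2
    · rw [LinearEquiv.finrank_map_eq, hS₀rank, hS]
  have hmaple : ∀ P : Submodule F (K × F),
      Submodule.map (Φ : (K × F) →ₗ[F] V) P ≤ S ↔ P ≤ S₀ := by
    intro P
    rw [← hmapS]
    exact LinearMap.map_le_map_iff' (LinearEquiv.ker Φ)
  obtain ⟨pp, hpp0, hppv, hppe, hppS, hppE⟩ := model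
  refine ⟨fun i => Submodule.map (Φ : (K × F) →ₗ[F] V) (Submodule.span F {pp i}),
    ?_, ?_, ?_, ?_, ?_⟩
  · intro i
    rw [LinearEquiv.finrank_map_eq, finrank_span_singleton (hpp0 i)]
  · intro i j hij
    exact hppv i j (LinearMap.map_injective (LinearEquiv.ker Φ) hij)
  · intro i j hij
    simp only [← Submodule.map_sup] at hij
    have h2 := LinearMap.map_injective (LinearEquiv.ker Φ) hij
    rw [← Submodule.span_union, ← Submodule.span_union, Set.singleton_union,
      Set.singleton_union] at h2
    exact hppe i j h2
  · have hset : {i : Fin k | Submodule.map (Φ : (K × F) →ₗ[F] V) (Submodule.span F {pp i}) ≤ S}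
        = {i : Fin k | (pp i).2 = 0} := by
      ext i
      rw [Set.mem_setOf_eq, Set.mem_setOf_eq, hmaple, Submodule.span_singleton_le_iff_mem,
        hS₀mem]
    rw [hset, hppS]
    exact Set.ncard_pair (by
      intro hcon
      have := congrArg Fin.val hcon
      simp at this)
  · have hset : {i : Fin k | Submodule.map (Φ : (K × F) →ₗ[F] V) (Submodule.span F {pp i})
        ⊔ Submodule.map (Φ : (K × F) →ₗ[F] V) (Submodule.span F {pp (i + ⟨1, by omega⟩)}) ≤ S}
        = {i : Fin k | (pp i).2 = 0 ∧ (pp (i + ⟨1, by omega⟩)).2 = 0} := by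
      ext i
      rw [Set.mem_setOf_eq, Set.mem_setOf_eq, ← Submodule.map_sup, hmaple,
        ← Submodule.span_union, Set.singleton_union, Submodule.span_le,
        Set.insert_subset_iff, Set.singleton_subset_iff, SetLike.mem_coe, SetLike.mem_coe,
        hS₀mem, hS₀mem]
    rw [hset, hppE]
    exact Set.ncard_singleton _

/-- Let S ≅ PG(n-1,q) be a hyperplane of PG(n,q), n ≥ 2. For every k with 3 ≤ k ≤ qⁿ + 2
there is a k-cycle embedded in PG(n,q) (distinct points with pairwise distinct connecting
lines, indices mod k) having exactly two of its vertices in S and exactly one of its edges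
contained in S. -/
theorem cycle_meeting_hyperplane_in_edge (q n k : ℕ) (F : Type*) [Field F] [Fintype F]
    (hq : Fintype.card F = q) (hn : 2 ≤ n)
    (S : Submodule F (Fin (n + 1) → F)) (hS : finrank F S = n)
    (hk : 3 ≤ k) (hk' : k ≤ q ^ n + 2) :
    ∃ f : Fin k → Submodule F (Fin (n + 1) → F),
      (∀ i, finrank F (f i) = 1) ∧
      Function.Injective f ∧
      Function.Injective (fun i : Fin k => f i ⊔ f (i + ⟨1, by omega⟩)) ∧
      {i : Fin k | f i ≤ S}.ncard = 2 ∧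
      {i : Fin k | f i ⊔ f (i + ⟨1, by omega⟩) ≤ S}.ncard = 1 := by
  classical
  obtain ⟨K, _, _, _, _, hKcard, hKrank⟩ := exists_field_extension F n (by omega)
  rw [hq] at hKcard
  exact cycle_transport q n k F hq hn S hS hk hk' K hKcard hKrank
    (model_cycle F K q n k hq hn hk hk' hKcard)
end

section
/- For every k with 3 ≤ k ≤ q^2 and for any fixed point O of the affine plane AG(2,q), there exists an embedded k-cycle in AG(2,q) such that either (a) O is a vertex of the cycle and at least one line through O is not an edge of the cycle, or (b) O is not a vertex, k = t(q+1) for some 1 ≤ t ≤ q-1, and no line through O is an edge of the cycle. -/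
open Module

open Polynomial

section Geom

variable {F K : Type*} [Field F] [Field K] [Algebra F K]

lemma memPair {x y z : K} :
    z ∈ affineSpan F ({x, y} : Set K) ↔ ∃ t : F, algebraMap F K t * (y - x) = z - x := by
  have h2 : z ∈ line[F, x, y] ↔ (z - x) +ᵥ x ∈ line[F, x, y] := by
    rw [vadd_eq_add, sub_add_cancel]
  rw [h2, vadd_left_mem_affineSpan_pair]
  simp [vsub_eq_sub, Algebra.smul_def]

lemma mem_zero_line {w z : K} :
    z ∈ affineSpan F ({(0 : K), w} : Set K) ↔ ∃ t : F, algebraMap F K t * w = z := by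
  rw [memPair]; simp

lemma indepFK {β : K} (hβ : ∀ μ : F, algebraMap F K μ ≠ β) {a b : F}
    (h : algebraMap F K a = algebraMap F K b * β) : a = 0 ∧ b = 0 := by
  have hb : b = 0 := by
    by_contra hb
    have hb0 : algebraMap F K b ≠ 0 := fun h0 => hb ((_root_.map_eq_zero (algebraMap F K)).mp h0)
    exact hβ (a / b) (by rw [map_div₀, h, mul_comm, mul_div_assoc, div_self hb0, mul_one])
  refine ⟨?_, hb⟩
  rw [hb, map_zero, zero_mul] at h
  exact (_root_.map_eq_zero (algebraMap F K)).mp h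

lemma zero_not_mem_spiral {β x : K} (hβ : ∀ μ : F, algebraMap F K μ ≠ β) (hx : x ≠ 0) :
    (0 : K) ∉ affineSpan F ({x, x * β} : Set K) := by
  intro h
  rw [memPair] at h
  obtain ⟨t, ht⟩ := h
  have hx' : x * (algebraMap F K t * β - algebraMap F K t + 1) = 0 := by linear_combination ht
  have h2 : algebraMap F K t * β - algebraMap F K t + 1 = 0 := by
    rcases mul_eq_zero.mp hx' with h' | h'
    · exact absurd h' hx
    · exact h'
  have h3 : algebraMap F K (t - 1) = algebraMap F K t * β := by
    rw [map_sub, map_one]; linear_combination -h2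
  obtain ⟨h4, h5⟩ := indepFK hβ h3
  rw [h5] at h4
  simp at h4

lemma spiral_inj {β x y : K} (hβ : ∀ μ : F, algebraMap F K μ ≠ β) (hx : x ≠ 0) (hy : y ≠ 0)
    (h : affineSpan F ({x, x * β} : Set K) = affineSpan F ({y, y * β} : Set K)) : x = y := by
  have hβ1 : β ≠ 1 := fun h1 => hβ 1 (by simp [h1])
  have h1 : y ∈ affineSpan F ({x, x * β} : Set K) := h ▸ left_mem_affineSpan_pair F y (y * β)
  have h2 : y * β ∈ affineSpan F ({x, x * β} : Set K) := h ▸ right_mem_affineSpan_pair F y (y * β)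
  rw [memPair] at h1 h2
  obtain ⟨s, hs⟩ := h1
  obtain ⟨t, ht⟩ := h2
  have hw : (x * (β - 1)) * (algebraMap F K s * β - algebraMap F K t + 1) = 0 := by
    linear_combination β * hs - ht
  have h2' : algebraMap F K s * β - algebraMap F K t + 1 = 0 := by
    rcases mul_eq_zero.mp hw with h' | h'
    · exact absurd h' (mul_ne_zero hx (sub_ne_zero.mpr hβ1))
    · exact h'
  have h3 : algebraMap F K (t - 1) = algebraMap F K s * β := by
    rw [map_sub, map_one]; linear_combination -h2'
  obtain ⟨h4, h5⟩ := indepFK hβ h3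
  rw [h5, map_zero, zero_mul] at hs
  linear_combination hs

lemma span_pair_eq_of_mem {x y u v : K} (hxy : x ≠ y) (huv : u ≠ v)
    (hu : u ∈ affineSpan F ({x, y} : Set K)) (hv : v ∈ affineSpan F ({x, y} : Set K)) :
    affineSpan F ({u, v} : Set K) = affineSpan F ({x, y} : Set K) := by
  obtain ⟨s, hs⟩ := memPair.mp hu
  obtain ⟨t, ht⟩ := memPair.mp hv
  have hst : s ≠ t := by
    rintro rfl
    exact huv (by linear_combination ht - hs)
  have hc : algebraMap F K s - algebraMap F K t ≠ 0 := by
    rw [← map_sub]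
    simp [sub_eq_zero, hst]
  have hc' : algebraMap F K t - algebraMap F K s ≠ 0 := fun h0 => hc (by linear_combination -h0)
  have hvu : v - u = (algebraMap F K t - algebraMap F K s) * (y - x) := by
    linear_combination hs - ht
  apply le_antisymm
  · exact affineSpan_pair_le_of_mem_of_mem hu hv
  · apply affineSpan_pair_le_of_mem_of_mem
    · rw [memPair]
      refine ⟨s / (s - t), ?_⟩
      rw [map_div₀, map_sub, div_mul_eq_mul_div, div_eq_iff hc, hvu]
      linear_combination (algebraMap F K s) * hvu + (algebraMap F K t - algebraMap F K s) * hs - hvu * algebraMap F K s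
    · rw [memPair]
      refine ⟨(1 - s) / (t - s), ?_⟩
      rw [map_div₀, map_sub, map_sub, map_one, div_mul_eq_mul_div, div_eq_iff hc', hvu]
      linear_combination (algebraMap F K s - algebraMap F K t) * hs


lemma master {F K : Type*} [Field F] [Fintype F] [Field K] [Fintype K] [Algebra F K]
    {q k : ℕ} (hq : Fintype.card F = q) (hK : Fintype.card K = q ^ 2)
    (hk : 3 ≤ k) (hk' : k ≤ q ^ 2) :
    ∃ g : Fin k → K,
      g ⟨0, by omega⟩ = 0 ∧
      Function.Injective g ∧
      (Function.Injective fun i : Fin k =>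
        affineSpan F {g i, g (i + ⟨1, by omega⟩)}) ∧
      ∃ B : K, B ≠ 0 ∧
        ∀ i : Fin k, affineSpan F ({0, B} : Set K) ≠
          affineSpan F {g i, g (i + ⟨1, by omega⟩)} := by
  classical
  have hq2 : 2 ≤ q := hq ▸ Fintype.one_lt_card
  have hq2q : q + 2 ≤ q ^ 2 := by
    have := Nat.mul_le_mul_left q hq2
    rw [pow_two]; omega
  set N := q ^ 2 - 1 with hN
  have hNq : (q + 1) * (q - 1) = N := by
    obtain ⟨c, rfl⟩ : ∃ c, q = c + 2 := ⟨q - 2, by omega⟩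
    have h1 : c + 2 - 1 = c + 1 := by omega
    rw [hN, h1]
    have h2 : (c + 2) ^ 2 = c * c + 4 * c + 4 := by ring
    rw [h2]
    ring_nf
    omega
  obtain ⟨ζ, hζ⟩ := IsCyclic.exists_generator (α := Kˣ)
  have hcard : Fintype.card Kˣ = N := by rw [Fintype.card_units, hK]
  have hordζ : orderOf ζ = N := by rw [orderOf_eq_card_of_forall_mem_zpowers hζ, Nat.card_eq_fintype_card, hcard]
  set β : K := (ζ : K) with hβ
  have hβ0 : β ≠ 0 := Units.ne_zero ζ
  have hordβ : orderOf β = N := by rw [hβ, orderOf_units, hordζ]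
  have hpow1 : ∀ m : ℕ, β ^ m = 1 ↔ N ∣ m := by
    intro m
    rw [← hordβ, orderOf_dvd_iff_pow_eq_one]
  have hcancel : ∀ a b : ℕ, a ≤ b → β ^ a = β ^ b → N ∣ b - a := by
    intro a b hab h
    have h1 : β ^ (b - a) * β ^ a = 1 * β ^ a := by
      rw [← pow_add, Nat.sub_add_cancel hab, ← h, one_mul]
    exact (hpow1 _).mp (mul_right_cancel₀ (pow_ne_zero a hβ0) h1)
  have hpow_inj : ∀ a b : ℕ, a < N → b < N → β ^ a = β ^ b → a = b := by
    intro a b ha hb h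
    rcases le_total a b with hab | hab
    · have h2 := hcancel a b hab h
      have h3 := Nat.eq_zero_of_dvd_of_lt h2
      omega
    · have h2 := hcancel b a hab h.symm
      have h3 := Nat.eq_zero_of_dvd_of_lt h2
      omega
  have hσinj : Function.Injective (algebraMap F K) := (algebraMap F K).injective
  have hσ : ∀ μ : F, algebraMap F K μ ≠ β := by
    intro μ hμ
    have hμ0 : μ ≠ 0 := by rintro rfl; rw [map_zero] at hμ; exact hβ0 hμ.symm
    have hμq : μ ^ (q - 1) = 1 := by
      have := FiniteField.pow_card_sub_one_eq_one μ hμ0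
      rwa [hq] at this
    have h1 : β ^ (q - 1) = 1 := by rw [← hμ, ← map_pow, hμq, map_one]
    have h2 := Nat.le_of_dvd (by omega) ((hpow1 _).mp h1)
    omega
  have hcls : ∀ (t : F) (m : ℕ), t ≠ 0 → algebraMap F K t = β ^ m → (q + 1) ∣ m := by
    intro t m ht h
    have htq : t ^ (q - 1) = 1 := by
      have := FiniteField.pow_card_sub_one_eq_one t ht
      rwa [hq] at this
    have h1 : β ^ (m * (q - 1)) = 1 := by
      rw [pow_mul, ← h, ← map_pow, htq, map_one]
    have h2 := (hpow1 _).mp h1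
    rw [← hNq] at h2
    exact (Nat.mul_dvd_mul_iff_right (by omega : 0 < q - 1)).mp h2
  have hF' : ∀ x : K, x ^ (q - 1) = 1 → ∃ μ : F, algebraMap F K μ = x := by
    intro x hx
    have hq1 : 0 < q - 1 := by omega
    set A : Finset K := Finset.univ.image (fun u : Fˣ => algebraMap F K u) with hA
    have hAcard : A.card = q - 1 := by
      rw [hA, Finset.card_image_of_injective _ (fun a b hab => Units.ext (hσinj hab)),
        Finset.card_univ, Fintype.card_units, hq]
    have hsub : A ⊆ nthRootsFinset (q - 1) (1 : K) := by
      intro y hy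
      rw [hA, Finset.mem_image] at hy
      obtain ⟨u, -, rfl⟩ := hy
      rw [mem_nthRootsFinset hq1, ← map_pow]
      have h3 : (u : F) ^ (q - 1) = 1 := by
        have := FiniteField.pow_card_sub_one_eq_one (u : F) (Units.ne_zero u)
        rwa [hq] at this
      rw [h3, map_one]
    have hcard2 : (nthRootsFinset (q - 1) (1 : K)).card ≤ q - 1 := by
      rw [nthRootsFinset_def]
      exact le_trans (Multiset.toFinset_card_le _) (card_nthRoots (q - 1) (1 : K))
    have hAeq : A = nthRootsFinset (q - 1) (1 : K) :=
      Finset.eq_of_subset_of_card_le hsub (by omega)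
    have hxA : x ∈ A := by rw [hAeq, mem_nthRootsFinset hq1]; exact hx
    rw [hA, Finset.mem_image] at hxA
    obtain ⟨u, -, hu⟩ := hxA
    exact ⟨u, hu⟩

  have hzero_ne : ∀ a b : ℕ, a ≤ b → ¬ (q + 1) ∣ (b - a) →
      affineSpan F ({0, β ^ a} : Set K) ≠ affineSpan F ({0, β ^ b} : Set K) := by
    intro a b hab hnd h
    have hb : β ^ b ∈ affineSpan F ({0, β ^ a} : Set K) := by
      rw [h]; exact right_mem_affineSpan_pair F _ _
    rw [mem_zero_line] at hb
    obtain ⟨t, ht⟩ := hb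
    have ht0 : t ≠ 0 := by
      rintro rfl
      rw [map_zero, zero_mul] at ht
      exact pow_ne_zero b hβ0 ht.symm
    have heq : algebraMap F K t = β ^ (b - a) := by
      have h1 : β ^ b = β ^ (b - a) * β ^ a := by rw [← pow_add, Nat.sub_add_cancel hab]
      rw [h1] at ht
      exact mul_right_cancel₀ (pow_ne_zero a hβ0) ht
    exact hnd (hcls t (b - a) ht0 heq)
  have hzs : ∀ x w : K, x ≠ 0 →
      affineSpan F ({0, w} : Set K) ≠ affineSpan F ({x, x * β} : Set K) := by
    intro x w hx h
    exact zero_not_mem_spiral hσ hx (h ▸ left_mem_affineSpan_pair F 0 w)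
  have hsucc : ∀ i : Fin k, (i + (⟨1, by omega⟩ : Fin k)).val = (i.val + 1) % k := by
    intro i; simp [Fin.add_def]
  by_cases hP : (q + 1) ∣ (k - 2)
  · -- problem case : (q+1) ∣ (k-2)
    obtain ⟨m, hm⟩ := hP
    have hm1 : 1 ≤ m := by rcases Nat.eq_zero_or_pos m with rfl | h; · omega
                           · exact h
    have hkq3 : q + 3 ≤ k := by
      have h1 : (q + 1) * 1 ≤ (q + 1) * m := Nat.mul_le_mul_left _ hm1
      omega
    have hq3 : 3 ≤ q := by
      by_contra hq3
      have hq2' : q = 2 := by omega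
      rw [hq2'] at hk'
      norm_num at hk'
      omega
    have hq4q : q + 4 ≤ q ^ 2 := by
      have := Nat.mul_le_mul_left q hq3
      rw [pow_two]; omega
    have hmq : m ≤ q - 2 := by
      by_contra hmq
      push_neg at hmq
      have h1 : (q + 1) * (q - 1) ≤ (q + 1) * m := Nat.mul_le_mul_left _ (by omega)
      rw [hNq] at h1
      omega
    have hq22 : (q + 1) * (q - 2) + q + 2 = q ^ 2 := by
      obtain ⟨c, rfl⟩ : ∃ c, q = c + 3 := ⟨q - 3, by omega⟩
      rw [show c + 3 - 2 = c + 1 from by omega]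
      ring
    have hkub : k + q ≤ q ^ 2 := by
      have h1 : (q + 1) * m ≤ (q + 1) * (q - 2) := Nat.mul_le_mul_left _ hmq
      omega
    set E : ℕ → ℕ := fun n => if n ≤ 2 then n - 1 else n + q - 1 with hE
    set G : ℕ → K := fun n => if n % k = 0 then 0 else β ^ (E (n % k)) with hG
    have hGmod : ∀ m', G (m' % k) = G m' := by
      intro m'; simp only [hG, Nat.mod_mod_of_dvd m' dvd_rfl]
    have hG0 : G 0 = 0 := by simp [hG]
    have hGk : G k = 0 := by simp [hG, Nat.mod_self]
    have hGn : ∀ n, 0 < n → n < k → G n = β ^ (E n) := by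
      intro n h1 h2
      simp only [hG, Nat.mod_eq_of_lt h2]
      rw [if_neg (by omega)]
    have hL : ∀ i : Fin k, affineSpan F ({G i.val, G ((i + (⟨1, by omega⟩ : Fin k)).val)} : Set K)
        = affineSpan F ({G i.val, G (i.val + 1)} : Set K) := by
      intro i; rw [hsucc i, hGmod]
    obtain ⟨μ, hμ⟩ : ∃ μ : F, algebraMap F K μ = β ^ (q + 1) := by
      apply hF'
      rw [← pow_mul, hNq]
      exact (hpow1 N).mpr dvd_rfl
    have hEbound : ∀ n, 1 ≤ n → n < k → E n < N := by
      intro n h1 h2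
      simp only [hE]
      split_ifs <;> omega
    have hEinj : ∀ a b, 1 ≤ a → a < k → 1 ≤ b → b < k → E a = E b → a = b := by
      intro a b h1 h2 h3 h4 h5
      simp only [hE] at h5
      split_ifs at h5 <;> omega
    have hnd1 : ¬ (q + 1) ∣ 1 := by
      intro h; have := Nat.le_of_dvd one_pos h; omega
    have hnd2 : ¬ (q + 1) ∣ 2 := by
      intro h; have := Nat.le_of_dvd (by omega) h; omega
    have hP' : (q + 1) ∣ (k - 2) := ⟨m, hm⟩
    have hndA : ¬ (q + 1) ∣ (k + q - 2 - 0) := by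
      intro h
      rw [Nat.sub_zero] at h
      have h2 := Nat.dvd_sub h hP'
      rw [show k + q - 2 - (k - 2) = q from by omega] at h2
      have := Nat.le_of_dvd (by omega) h2; omega
    have hndB : ¬ (q + 1) ∣ (k + q - 2 - 1) := by
      intro h
      have h2 := Nat.dvd_sub h hP'
      rw [show k + q - 2 - 1 - (k - 2) = q - 1 from by omega] at h2
      have := Nat.le_of_dvd (by omega) h2; omega
    have hndC : ¬ (q + 1) ∣ (k + q - 2 - 2) := by
      intro h
      have h2 := Nat.dvd_sub h hP'
      rw [show k + q - 2 - 2 - (k - 2) = q - 2 from by omega] at h2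
      have := Nat.le_of_dvd (by omega) h2; omega
    have rep : ∀ n, n < k →
        (n = 0 ∧ affineSpan F ({G n, G (n+1)} : Set K) = affineSpan F ({0, β ^ (0:ℕ)} : Set K)) ∨
        (n = 2 ∧ affineSpan F ({G n, G (n+1)} : Set K) = affineSpan F ({0, β ^ (1:ℕ)} : Set K)) ∨
        (n = k - 1 ∧ affineSpan F ({G n, G (n+1)} : Set K)
            = affineSpan F ({0, β ^ (k + q - 2)} : Set K)) ∨
        ((1 ≤ n ∧ n ≤ k - 2 ∧ n ≠ 2) ∧ affineSpan F ({G n, G (n+1)} : Set K)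
            = affineSpan F ({β ^ (E n), β ^ (E n) * β} : Set K)) := by
      intro n hn
      by_cases h0 : n = 0
      · left
        refine ⟨h0, ?_⟩
        subst h0
        rw [hG0, hGn 1 one_pos (by omega)]
        norm_num [hE]
      by_cases h2 : n = 2
      · right; left
        refine ⟨h2, ?_⟩
        subst h2
        rw [hGn 2 (by omega) (by omega), hGn 3 (by omega) (by omega),
          show E 2 = 1 from by norm_num [hE],
          show E 3 = q + 2 from by simp only [hE]; norm_num; omega]
        apply span_pair_eq_of_mem
        · exact fun h => (pow_ne_zero 1 hβ0) h.symm
        · intro h; have := hpow_inj 1 (q+2) (by omega) (by omega) h; omega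
        · exact right_mem_affineSpan_pair F _ _
        · rw [mem_zero_line]
          exact ⟨μ, by rw [hμ, pow_one, ← pow_succ]⟩
      by_cases hl : n = k - 1
      · right; right; left
        refine ⟨hl, ?_⟩
        subst hl
        have hE1 : E (k - 1) = k + q - 2 := by
          simp only [hE]; rw [if_neg (by omega)]; omega
        rw [hGn (k-1) (by omega) (by omega), show k - 1 + 1 = k from by omega, hGk, hE1,
          Set.pair_comm]
      · right; right; right
        refine ⟨⟨by omega, by omega, h2⟩, ?_⟩
        have hEs : E (n + 1) = E n + 1 := by
          simp only [hE]
          split_ifs <;> omega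
        rw [hGn n (by omega) (by omega), hGn (n+1) (by omega) (by omega), hEs, pow_succ]
    refine ⟨fun i => G i.val, by simpa using hG0, ?_, ?_, ?_⟩
    · intro i j hij
      simp only at hij
      have hi := i.isLt; have hj := j.isLt
      rcases Nat.eq_zero_or_pos i.val with h0i | h0i
      · rcases Nat.eq_zero_or_pos j.val with h0j | h0j
        · exact Fin.ext (by omega)
        · rw [h0i, hG0, hGn j.val h0j hj] at hij
          exact absurd hij.symm (pow_ne_zero _ hβ0)
      · rcases Nat.eq_zero_or_pos j.val with h0j | h0j
        · rw [h0j, hG0, hGn i.val h0i hi] at hij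
          exact absurd hij (pow_ne_zero _ hβ0)
        · rw [hGn i.val h0i hi, hGn j.val h0j hj] at hij
          have h1 := hpow_inj _ _ (hEbound _ h0i hi) (hEbound _ h0j hj) hij
          exact Fin.ext (hEinj _ _ h0i hi h0j hj h1)
    · intro i j hij
      simp only at hij
      rw [hL i, hL j] at hij
      have main : ∀ n m' : ℕ, n < k → m' < k →
          affineSpan F ({G n, G (n+1)} : Set K) = affineSpan F ({G m', G (m'+1)} : Set K) →
          n = m' := by
        intro n m' hn hm h
        rcases rep n hn with ⟨hn0, e1⟩ | ⟨hn0, e1⟩ | ⟨hn0, e1⟩ | ⟨⟨hn1, hn2, hn3⟩, e1⟩ <;>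
          rcases rep m' hm with ⟨hm0, e2⟩ | ⟨hm0, e2⟩ | ⟨hm0, e2⟩ | ⟨⟨hm1, hm2, hm3⟩, e2⟩ <;>
          rw [e1, e2] at h
        · omega
        · exact absurd h (hzero_ne 0 1 (by omega) (by simpa using hnd1))
        · exact absurd h (hzero_ne 0 (k + q - 2) (by omega) hndA)
        · exact absurd h (hzs _ _ (pow_ne_zero _ hβ0))
        · exact absurd h.symm (hzero_ne 0 1 (by omega) (by simpa using hnd1))
        · omega
        · exact absurd h (hzero_ne 1 (k + q - 2) (by omega) hndB)
        · exact absurd h (hzs _ _ (pow_ne_zero _ hβ0))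
        · exact absurd h.symm (hzero_ne 0 (k + q - 2) (by omega) hndA)
        · exact absurd h.symm (hzero_ne 1 (k + q - 2) (by omega) hndB)
        · omega
        · exact absurd h (hzs _ _ (pow_ne_zero _ hβ0))
        · exact absurd h.symm (hzs _ _ (pow_ne_zero _ hβ0))
        · exact absurd h.symm (hzs _ _ (pow_ne_zero _ hβ0))
        · exact absurd h.symm (hzs _ _ (pow_ne_zero _ hβ0))
        · have h1 := spiral_inj hσ (pow_ne_zero _ hβ0) (pow_ne_zero _ hβ0) h
          have h2 := hpow_inj _ _ (hEbound _ (by omega) (by omega)) (hEbound _ (by omega) (by omega)) h1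
          exact hEinj _ _ (by omega) (by omega) (by omega) (by omega) h2
      exact Fin.ext (main i.val j.val i.isLt j.isLt hij)
    · refine ⟨β ^ (2:ℕ), pow_ne_zero _ hβ0, ?_⟩
      intro i h
      simp only at h
      rw [hL i] at h
      rcases rep i.val i.isLt with ⟨_, e⟩ | ⟨_, e⟩ | ⟨_, e⟩ | ⟨⟨h1, h2, h3⟩, e⟩ <;> rw [e] at h
      · exact hzero_ne 0 2 (by omega) (by simpa using hnd2) h.symm
      · exact hzero_ne 1 2 (by omega) (by simpa using hnd1) h.symm
      · exact hzero_ne 2 (k + q - 2) (by omega) hndC h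
      · exact hzs _ _ (pow_ne_zero _ hβ0) h

  · -- good case
    set G : ℕ → K := fun n => if n % k = 0 then 0 else β ^ (n % k - 1) with hG
    have hGmod : ∀ m, G (m % k) = G m := by
      intro m; simp only [hG, Nat.mod_mod_of_dvd m dvd_rfl]
    have hG0 : G 0 = 0 := by simp [hG]
    have hGk : G k = 0 := by simp [hG, Nat.mod_self]
    have hGn : ∀ n, 0 < n → n < k → G n = β ^ (n - 1) := by
      intro n h1 h2
      simp only [hG, Nat.mod_eq_of_lt h2]
      rw [if_neg (by omega)]
    have hL : ∀ i : Fin k, affineSpan F ({G i.val, G ((i + (⟨1, by omega⟩ : Fin k)).val)} : Set K)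
        = affineSpan F ({G i.val, G (i.val + 1)} : Set K) := by
      intro i; rw [hsucc i, hGmod]
    have rep : ∀ n, n < k →
        (n = 0 ∧ affineSpan F ({G n, G (n+1)} : Set K) = affineSpan F ({0, β ^ (0:ℕ)} : Set K)) ∨
        (n = k - 1 ∧ affineSpan F ({G n, G (n+1)} : Set K)
          = affineSpan F ({0, β ^ (k-2)} : Set K)) ∨
        (1 ≤ n ∧ n ≤ k - 2 ∧ affineSpan F ({G n, G (n+1)} : Set K)
          = affineSpan F ({β ^ (n-1), β ^ (n-1) * β} : Set K)) := by
      intro n hn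
      by_cases h0 : n = 0
      · left
        refine ⟨h0, ?_⟩
        subst h0
        rw [hG0, hGn 1 one_pos (by omega)]
      by_cases hl : n = k - 1
      · right; left
        refine ⟨hl, ?_⟩
        subst hl
        rw [hGn (k-1) (by omega) (by omega), show k - 1 + 1 = k from by omega, hGk,
          Set.pair_comm, show k - 1 - 1 = k - 2 from by omega]
      · right; right
        refine ⟨by omega, by omega, ?_⟩
        rw [hGn n (by omega) (by omega), hGn (n+1) (by omega) (by omega),
          show n + 1 - 1 = n - 1 + 1 from by omega, pow_succ]
    refine ⟨fun i => G i.val, by simpa using hG0, ?_, ?_, ?_⟩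
    · -- vertex injectivity
      intro i j hij
      simp only at hij
      have hi := i.isLt; have hj := j.isLt
      rcases Nat.eq_zero_or_pos i.val with h0i | h0i
      · rcases Nat.eq_zero_or_pos j.val with h0j | h0j
        · exact Fin.ext (by omega)
        · rw [h0i, hG0, hGn j.val h0j hj] at hij
          exact absurd hij.symm (pow_ne_zero _ hβ0)
      · rcases Nat.eq_zero_or_pos j.val with h0j | h0j
        · rw [h0j, hG0, hGn i.val h0i hi] at hij
          exact absurd hij (pow_ne_zero _ hβ0)
        · rw [hGn i.val h0i hi, hGn j.val h0j hj] at hij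
          have := hpow_inj _ _ (by omega) (by omega) hij
          exact Fin.ext (by omega)
    · -- line injectivity
      intro i j hij
      simp only at hij
      rw [hL i, hL j] at hij
      have main : ∀ n m : ℕ, n < k → m < k →
          affineSpan F ({G n, G (n+1)} : Set K) = affineSpan F ({G m, G (m+1)} : Set K) →
          n = m := by
        intro n m hn hm h
        rcases rep n hn with ⟨hn0, e1⟩ | ⟨hnl, e1⟩ | ⟨hn1, hn2, e1⟩ <;>
          rcases rep m hm with ⟨hm0, e2⟩ | ⟨hml, e2⟩ | ⟨hm1, hm2, e2⟩
        · omega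
        · exfalso; rw [e1, e2] at h
          exact hzero_ne 0 (k-2) (by omega) (by simpa using hP) h
        · exfalso; rw [e1, e2] at h
          exact hzs _ _ (pow_ne_zero _ hβ0) h
        · exfalso; rw [e1, e2] at h
          exact hzero_ne 0 (k-2) (by omega) (by simpa using hP) h.symm
        · omega
        · exfalso; rw [e1, e2] at h
          exact hzs _ _ (pow_ne_zero _ hβ0) h
        · exfalso; rw [e1, e2] at h
          exact hzs _ _ (pow_ne_zero _ hβ0) h.symm
        · exfalso; rw [e1, e2] at h
          exact hzs _ _ (pow_ne_zero _ hβ0) h.symm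
        · rw [e1, e2] at h
          have h1 := spiral_inj hσ (pow_ne_zero _ hβ0) (pow_ne_zero _ hβ0) h
          have h2 := hpow_inj _ _ (by omega) (by omega) h1
          omega
      exact Fin.ext (main i.val j.val i.isLt j.isLt hij)
    · -- free line through 0
      obtain ⟨c, hc1, hc2, hc3⟩ : ∃ c : ℕ, ¬ (q+1) ∣ c ∧
          (c ≤ k - 2 → ¬ (q+1) ∣ (k - 2 - c)) ∧ (k - 2 ≤ c → ¬ (q+1) ∣ (c - (k - 2))) := by
        by_cases hd3 : (q + 1) ∣ (k - 3)
        · refine ⟨2, ?_, ?_, ?_⟩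
          · intro hdd; have := Nat.le_of_dvd (by omega) hdd; omega
          · intro hck hdd
            have hk4 : 4 ≤ k := by omega
            have h1 := Nat.dvd_sub hd3 hdd
            rw [show k - 3 - (k - 2 - 2) = 1 from by omega] at h1
            have := Nat.le_of_dvd (by omega) h1; omega
          · intro hck hdd
            have hk34 : k = 3 ∨ k = 4 := by omega
            rcases hk34 with rfl | rfl
            · rw [show 2 - (3 - 2) = 1 from by omega] at hdd
              have := Nat.le_of_dvd (by omega) hdd; omega
            · have := Nat.le_of_dvd (by omega) hd3; omega
        · refine ⟨1, ?_, ?_, ?_⟩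
          · intro hdd; have := Nat.le_of_dvd (by omega) hdd; omega
          · intro hck hdd
            exact hd3 (by rwa [show k - 2 - 1 = k - 3 from by omega] at hdd)
          · intro hck hdd
            have hk3 : k = 3 := by omega
            exact hd3 (by rw [hk3]; simp)
      refine ⟨β ^ c, pow_ne_zero _ hβ0, ?_⟩
      intro i h
      simp only at h
      rw [hL i] at h
      rcases rep i.val i.isLt with ⟨_, e⟩ | ⟨_, e⟩ | ⟨h1, h2, e⟩
      · rw [e] at h
        exact hzero_ne 0 c (Nat.zero_le _) (by simpa using hc1) h.symm
      · rw [e] at h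
        rcases le_total c (k-2) with hck | hck
        · exact hzero_ne c (k-2) hck (hc2 hck) h
        · exact hzero_ne (k-2) c hck (hc3 hck) h.symm
      · rw [e] at h
        exact hzs _ _ (pow_ne_zero _ hβ0) h


end Geom

open Polynomial in

lemma exists_irreducible_quadratic (F : Type*) [Field F] [Fintype F] :
    ∃ f : Polynomial F, f.Monic ∧ f.natDegree = 2 ∧ Irreducible f := by
  classical
  set T : Finset (Polynomial F) :=
    Finset.univ.image (fun bc : F × F => X ^ 2 + C bc.1 * X + C bc.2) with hT
  set S : Finset (Polynomial F) :=
    Finset.univ.image (fun rs : F × F => (X + C rs.1) * (X + C rs.2)) with hS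
  have hTcard : T.card = Fintype.card F * Fintype.card F := by
    rw [hT, Finset.card_image_of_injective, Finset.card_univ, Fintype.card_prod]
    intro a b hab
    simp only at hab
    have h1 : (X ^ 2 + C a.1 * X + C a.2).coeff 1 = (X ^ 2 + C b.1 * X + C b.2).coeff 1 := by
      rw [hab]
    have h0 : (X ^ 2 + C a.1 * X + C a.2).coeff 0 = (X ^ 2 + C b.1 * X + C b.2).coeff 0 := by
      rw [hab]
    simp [coeff_add, coeff_X_pow, coeff_C] at h1 h0
    exact Prod.ext h1 h0
  have hScard : S.card ≤ Fintype.card F * Fintype.card F - 1 := by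
    have hsub : S ⊆ (Finset.univ.erase ((0 : F), (1 : F))).image
        (fun rs : F × F => (X + C rs.1) * (X + C rs.2)) := by
      intro g hg
      rw [hS, Finset.mem_image] at hg
      obtain ⟨rs, -, rfl⟩ := hg
      rw [Finset.mem_image]
      by_cases hrs : rs = ((0 : F), (1 : F))
      · refine ⟨((1 : F), (0 : F)), Finset.mem_erase.mpr ⟨?_, Finset.mem_univ _⟩, ?_⟩
        · intro h
          have := congrArg Prod.fst h
          simp at this
        · rw [hrs]; ring
      · exact ⟨rs, Finset.mem_erase.mpr ⟨hrs, Finset.mem_univ _⟩, rfl⟩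
    calc S.card ≤ _ := Finset.card_le_card hsub
      _ ≤ (Finset.univ.erase ((0 : F), (1 : F))).card := Finset.card_image_le
      _ = Fintype.card F * Fintype.card F - 1 := by
          rw [Finset.card_erase_of_mem (Finset.mem_univ _), Finset.card_univ, Fintype.card_prod]
  have hA : 1 ≤ Fintype.card F * Fintype.card F :=
    Nat.mul_pos Fintype.card_pos Fintype.card_pos
  have hST : ¬ T ⊆ S := by
    intro hsub
    have := Finset.card_le_card hsub
    omega
  obtain ⟨g, hgT, hgS⟩ := Finset.not_subset.mp hST
  rw [hT, Finset.mem_image] at hgT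
  obtain ⟨bc, -, rfl⟩ := hgT
  have hdeg : (C bc.1 * X + C bc.2).degree < (X ^ 2 : Polynomial F).degree := by
    rw [degree_X_pow]
    exact lt_of_le_of_lt degree_linear_le (by norm_num)
  have hassoc : X ^ 2 + C bc.1 * X + C bc.2 = X ^ 2 + (C bc.1 * X + C bc.2) := by ring
  have hmon : (X ^ 2 + C bc.1 * X + C bc.2).Monic := by
    rw [hassoc]; exact (monic_X_pow 2).add_of_left hdeg
  have hd2 : (X ^ 2 + C bc.1 * X + C bc.2).degree = ((2 : ℕ) : WithBot ℕ) := by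
    rw [hassoc, degree_add_eq_left_of_degree_lt hdeg, degree_X_pow]
  have hnd : (X ^ 2 + C bc.1 * X + C bc.2).natDegree = 2 :=
    natDegree_eq_of_degree_eq_some hd2
  refine ⟨_, hmon, hnd, ?_⟩
  by_contra hirr
  rw [hmon.not_irreducible_iff_exists_add_mul_eq_coeff hnd] at hirr
  obtain ⟨c1, c2, hc0, hc1⟩ := hirr
  apply hgS
  rw [hS, Finset.mem_image]
  refine ⟨(c1, c2), Finset.mem_univ _, ?_⟩
  have hb2 : bc.2 = c1 * c2 := by simpa [coeff_add, coeff_X_pow, coeff_C] using hc0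
  have hb1 : bc.1 = c1 + c2 := by simpa [coeff_add, coeff_X_pow, coeff_C] using hc1
  rw [hb1, hb2, C_add, C_mul]
  ring


lemma memPairMod {F V : Type*} [Field F] [AddCommGroup V] [Module F V] {x y z : V} :
    z ∈ affineSpan F ({x, y} : Set V) ↔ ∃ t : F, t • (y - x) = z - x := by
  have h2 : z ∈ line[F, x, y] ↔ (z - x) +ᵥ x ∈ line[F, x, y] := by
    rw [vadd_eq_add, sub_add_cancel]
  rw [h2, vadd_left_mem_affineSpan_pair]
  simp [vsub_eq_sub]

/-- For every 3 ≤ k ≤ q² and every point O of the affine plane AG(2,q), there is an embedded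
k-cycle (k distinct points whose consecutive connecting affine lines, indices mod k, are
pairwise distinct) such that either (a) O is a vertex and at least one affine line through O
is not an edge of the cycle, or (b) O is not a vertex, k = t(q+1) for some 1 ≤ t ≤ q-1, and
no affine line through O is an edge of the cycle (equivalently, no edge passes through O). -/
theorem cycle_in_AG2_avoiding_or_through_O (q k : ℕ) (F : Type*) [Field F] [Fintype F]
    (hq : Fintype.card F = q) (hk : 3 ≤ k) (hk' : k ≤ q ^ 2)
    (O : Fin 2 → F) :
    ∃ f : Fin k → (Fin 2 → F),
      Function.Injective f ∧
      Function.Injective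
        (fun i : Fin k => affineSpan F {f i, f (i + ⟨1, by omega⟩)}) ∧
      ((∃ i, f i = O) ∧
        (∃ A : Fin 2 → F, A ≠ O ∧
          ∀ i : Fin k, affineSpan F {O, A} ≠
            affineSpan F {f i, f (i + ⟨1, by omega⟩)}) ∨
       (∀ i, f i ≠ O) ∧
        (∃ t, 1 ≤ t ∧ t ≤ q - 1 ∧ k = t * (q + 1)) ∧
        (∀ i : Fin k, O ∉ affineSpan F {f i, f (i + ⟨1, by omega⟩)})) := by
  classical
  obtain ⟨fq, hmon, hdeg, hirr⟩ := exists_irreducible_quadratic F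
  haveI : Fact (Irreducible fq) := ⟨hirr⟩
  set K := AdjoinRoot fq with hK
  have hfq0 : fq ≠ 0 := hmon.ne_zero
  let pb : PowerBasis F K := AdjoinRoot.powerBasis hfq0
  haveI : Module.Finite F K := Module.Finite.of_basis pb.basis
  haveI : Finite K := Module.finite_of_finite F
  letI : Fintype K := Fintype.ofFinite K
  have hdim : pb.dim = 2 := by
    have h1 : pb.dim = fq.natDegree := rfl
    rw [h1, hdeg]
  have hcardK : Fintype.card K = q ^ 2 := by
    rw [Module.card_fintype pb.basis, hq, Fintype.card_fin, hdim]
  obtain ⟨g, hg0, hginj, hlinj, B, hB0, hBline⟩ := master hq hcardK hk hk'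
  let bK : Basis (Fin 2) F K := pb.basis.reindex (finCongr hdim)
  let e : K ≃ₗ[F] (Fin 2 → F) := bK.equivFun
  have hmem : ∀ z x y : K, (O + e z) ∈ affineSpan F ({O + e x, O + e y} : Set (Fin 2 → F)) ↔
      z ∈ affineSpan F ({x, y} : Set K) := by
    intro z x y
    rw [memPairMod, memPairMod]
    constructor
    · rintro ⟨t, ht⟩
      simp only [add_sub_add_left_eq_sub] at ht
      exact ⟨t, e.injective (by rw [map_smul, map_sub, map_sub]; exact ht)⟩
    · rintro ⟨t, ht⟩
      refine ⟨t, ?_⟩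
      simp only [add_sub_add_left_eq_sub]
      rw [← map_sub, ← map_sub, ← map_smul, ht]
  have hspan : ∀ x y u v : K,
      affineSpan F ({O + e x, O + e y} : Set (Fin 2 → F)) =
        affineSpan F ({O + e u, O + e v} : Set (Fin 2 → F)) →
      affineSpan F ({x, y} : Set K) = affineSpan F ({u, v} : Set K) := by
    intro x y u v h
    ext w
    constructor
    · intro hw
      exact (hmem w u v).mp (h ▸ (hmem w x y).mpr hw)
    · intro hw
      exact (hmem w x y).mp (h.symm ▸ (hmem w u v).mpr hw)
  refine ⟨fun i => O + e (g i), ?_, ?_, Or.inl ⟨⟨⟨0, by omega⟩, by show O + e (g ⟨0, by omega⟩) = O; rw [show g ⟨0, by omega⟩ = 0 from hg0, map_zero, add_zero]⟩,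
    ⟨O + e B, ?_, ?_⟩⟩⟩
  · intro i j hij
    simp only [add_right_inj] at hij
    exact hginj (e.injective hij)
  · intro i j hij
    simp only at hij
    exact hlinj (hspan _ _ _ _ hij)
  · intro hA
    have h1 : e B = 0 := by
      have h2 := congrArg (fun v => v - O) hA
      simpa using h2
    exact hB0 (e.injective (h1.trans (map_zero e).symm))
  · intro i h
    simp only at h
    have h' : affineSpan F ({O + e 0, O + e B} : Set (Fin 2 → F)) =
        affineSpan F ({O + e (g i), O + e (g (i + ⟨1, by omega⟩))} : Set (Fin 2 → F)) := by
      rw [map_zero, add_zero]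
      exact h
    exact hBline i (hspan _ _ _ _ h')
end
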